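/- Let K ≥ 1 and N_t ≥ 1 be integers, ρ > 0 and σ_q ≥ 0 real numbers, and let H be a K × N_t complex matrix satisfying Hᴴ·H = K·I_{N_t}, where Hᴴ is the conjugate transpose. Let x ∈ ℂ^{N_t} be a fixed vector, and let n′ ∈ ℂ^K be a random vector whose entries n′_k = a_k + i·b_k are built from 2K mutually independent real Gaussian random variables a_k, b_k, each with mean 0 and variance (1 + σ_q²·ρ/N_t)/2. Define ŷ = √(ρ/N_t)·H·x + n′ and x̌ = √(N_t/ρ)·(1/K)·Hᴴ·ŷ. Then (1/N_t)·E[‖x − x̌‖²] = (N_t·ρ⁻¹ + σ_q²)/K. -/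

import Mathlib

open MeasureTheory ProbabilityTheory Matrix
open scoped BigOperators NNReal ENNReal

section GaussAux

open Real

lemma gauss_pdf_eq (v : ℝ≥0) (x : ℝ) :
    gaussianPDFReal 0 v x = (Real.sqrt (2 * π * v))⁻¹ * Real.exp (-(2 * (v:ℝ))⁻¹ * x ^ 2) := by
  rw [gaussianPDFReal_def]
  simp only [sub_zero]
  congr 2
  ring

lemma gauss_integral (v : ℝ≥0) (hv : v ≠ 0) (f : ℝ → ℝ) :
    ∫ x, f x ∂(gaussianReal 0 v) = ∫ x, gaussianPDFReal 0 v x * f x := by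
  rw [gaussianReal_of_var_ne_zero _ hv, gaussianPDF_def]
  have : (fun x => ENNReal.ofReal (gaussianPDFReal 0 v x))
      = fun x => ((Real.toNNReal (gaussianPDFReal 0 v x) : ℝ≥0) : ℝ≥0∞) := rfl
  rw [this, integral_withDensity_eq_integral_smul
    ((measurable_gaussianPDFReal 0 v).real_toNNReal) f]
  congr 1 with x
  simp [NNReal.smul_def, Real.coe_toNNReal _ (gaussianPDFReal_nonneg 0 v x)]

lemma gauss_integrable_iff (v : ℝ≥0) (hv : v ≠ 0) (f : ℝ → ℝ) :
    Integrable f (gaussianReal 0 v) ↔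
      Integrable (fun x => gaussianPDFReal 0 v x * f x) volume := by
  rw [gaussianReal_of_var_ne_zero _ hv, gaussianPDF_def]
  have : (fun x => ENNReal.ofReal (gaussianPDFReal 0 v x))
      = fun x => ((Real.toNNReal (gaussianPDFReal 0 v x) : ℝ≥0) : ℝ≥0∞) := rfl
  rw [this, integrable_withDensity_iff_integrable_smul
    ((measurable_gaussianPDFReal 0 v).real_toNNReal)]
  constructor <;> intro h <;> refine h.congr (Filter.Eventually.of_forall fun x => ?_) <;>
    simp [NNReal.smul_def, Real.coe_toNNReal _ (gaussianPDFReal_nonneg 0 v x)]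

lemma gauss_int_id (v : ℝ≥0) (hv : v ≠ 0) :
    Integrable (fun x : ℝ => x) (gaussianReal 0 v) := by
  have hb : (0:ℝ) < (2 * (v:ℝ))⁻¹ := by
    have : (0:ℝ) < (v:ℝ) := lt_of_le_of_ne (v.coe_nonneg) (by exact_mod_cast hv.symm)
    positivity
  rw [gauss_integrable_iff v hv]
  have := (integrable_mul_exp_neg_mul_sq hb).const_mul (Real.sqrt (2 * π * v))⁻¹
  refine this.congr (Filter.Eventually.of_forall fun x => ?_)
  simp only [gauss_pdf_eq]; ring

lemma gauss_int_sq (v : ℝ≥0) (hv : v ≠ 0) :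
    Integrable (fun x : ℝ => x ^ 2) (gaussianReal 0 v) := by
  have hb : (0:ℝ) < (2 * (v:ℝ))⁻¹ := by
    have : (0:ℝ) < (v:ℝ) := lt_of_le_of_ne (v.coe_nonneg) (by exact_mod_cast hv.symm)
    positivity
  rw [gauss_integrable_iff v hv]
  have := (integrable_rpow_mul_exp_neg_mul_sq hb (by norm_num : (-1:ℝ) < 2)).const_mul
    (Real.sqrt (2 * π * v))⁻¹
  refine this.congr (Filter.Eventually.of_forall fun x => ?_)
  simp only [gauss_pdf_eq]
  rw [show x ^ (2:ℝ) = x ^ (2:ℕ) by rw [show ((2:ℝ)) = ((2:ℕ) : ℝ) by norm_num, Real.rpow_natCast]]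
  ring

lemma gauss_integral_id (v : ℝ≥0) (hv : v ≠ 0) :
    ∫ x, x ∂(gaussianReal 0 v) = 0 := by
  rw [gauss_integral v hv]
  have key : ∫ x : ℝ, gaussianPDFReal 0 v x * x =
      - ∫ x : ℝ, gaussianPDFReal 0 v x * x := by
    nth_rewrite 1 [← integral_neg_eq_self (fun x : ℝ => gaussianPDFReal 0 v x * x) volume]
    rw [← integral_neg]
    congr 1 with x
    simp only [gauss_pdf_eq]
    ring_nf
  linarith [key]

lemma gauss_integral_sq (v : ℝ≥0) (hv : v ≠ 0) :
    ∫ x, x ^ 2 ∂(gaussianReal 0 v) = v := by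
  have hvpos : (0:ℝ) < (v:ℝ) := lt_of_le_of_ne (v.coe_nonneg) (by exact_mod_cast hv.symm)
  have hb : (0:ℝ) < (2 * (v:ℝ))⁻¹ := by positivity
  rw [gauss_integral v hv]
  have h1 : ∫ x : ℝ, gaussianPDFReal 0 v x * x ^ 2
      = (Real.sqrt (2 * π * v))⁻¹ * ∫ x : ℝ, x ^ 2 * Real.exp (-(2 * (v:ℝ))⁻¹ * x ^ 2) := by
    rw [← integral_const_mul]
    congr 1 with x
    rw [gauss_pdf_eq]; ring
  rw [h1]
  have h2 : ∫ x : ℝ, x ^ 2 * Real.exp (-(2 * (v:ℝ))⁻¹ * x ^ 2)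
      = 2 * ∫ x in Set.Ioi (0:ℝ), x ^ 2 * Real.exp (-(2 * (v:ℝ))⁻¹ * x ^ 2) := by
    rw [← integral_comp_abs (f := fun x => x ^ 2 * Real.exp (-(2 * (v:ℝ))⁻¹ * x ^ 2))]
    congr 1 with x
    rw [sq_abs]
  rw [h2]
  have h3 : ∫ x in Set.Ioi (0:ℝ), x ^ 2 * Real.exp (-(2 * (v:ℝ))⁻¹ * x ^ 2)
      = ((2 * (v:ℝ))⁻¹) ^ (-(3:ℝ)/2) * (1/2) * Real.Gamma (3/2) := by
    have := integral_rpow_mul_exp_neg_mul_rpow (p := 2) (q := 2) (b := (2 * (v:ℝ))⁻¹)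
      (by norm_num) (by norm_num) hb
    rw [show ((2:ℝ) + 1) / 2 = 3/2 by norm_num, show (-(2+1:ℝ))/2 = -(3:ℝ)/2 by norm_num] at this
    rw [← this]
    congr 1 with x
    rw [show ((2:ℝ) : ℝ) = ((2:ℕ) : ℝ) by norm_num, Real.rpow_natCast]
  rw [h3]
  have hGamma : Real.Gamma (3/2) = Real.sqrt π / 2 := by
    rw [show (3:ℝ)/2 = 1/2 + 1 by norm_num, Real.Gamma_add_one (by norm_num),
      Real.Gamma_one_half_eq]
    ring
  rw [hGamma]
  set t : ℝ := 2 * (v:ℝ) with ht_def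
  have htpos : 0 < t := by positivity
  have e1 : (t⁻¹) ^ (-(3:ℝ)/2) = t ^ ((3:ℝ)/2) := by
    rw [← Real.rpow_neg_one, ← Real.rpow_mul htpos.le]
    norm_num
  rw [e1]
  have e2 : t ^ ((3:ℝ)/2) = t * Real.sqrt t := by
    rw [show (3:ℝ)/2 = 1 + 1/2 by norm_num, Real.rpow_add htpos, Real.rpow_one,
      ← Real.sqrt_eq_rpow]
  have e3 : Real.sqrt (2 * π * (v:ℝ)) = Real.sqrt π * Real.sqrt t := by
    rw [← Real.sqrt_mul Real.pi_pos.le]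
    congr 1; rw [ht_def]; ring
  rw [e2, e3]
  have hπ : Real.sqrt π ≠ 0 := by positivity
  have hst : Real.sqrt t ≠ 0 := by positivity
  have e4 : (Real.sqrt π * Real.sqrt t)⁻¹ * (2 * (t * Real.sqrt t * (1/2) * (Real.sqrt π / 2)))
      = ((Real.sqrt π)⁻¹ * Real.sqrt π) * ((Real.sqrt t)⁻¹ * Real.sqrt t) * (t / 2) := by
    rw [mul_inv]; ring
  rw [e4, inv_mul_cancel₀ hπ, inv_mul_cancel₀ hst, ht_def]
  ring

end GaussAux

/-- Lemma 3: under the Gaussian approximation of the quantization error and the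
orthogonality condition `Hᴴ·H = K·I`, the MSE of the zero-forcing-type estimator equals
`(N_t·ρ⁻¹ + σ_q²)/K`. -/
theorem mse_zf_estimator (Ω : Type*) [MeasurableSpace Ω]
    (P : Measure Ω) [IsProbabilityMeasure P] (K Nt : ℕ) (hK : 1 ≤ K) (hNt : 1 ≤ Nt)
    (ρ : ℝ) (hρ : 0 < ρ) (σq : ℝ) (hσq : 0 ≤ σq)
    (H : Matrix (Fin K) (Fin Nt) ℂ) (hH : Hᴴ * H = (K : ℂ) • 1)
    (x : Fin Nt → ℂ)
    (a b : Ω → Fin K → ℝ)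
    (ham : ∀ k, Measurable fun ω => a ω k) (hbm : ∀ k, Measurable fun ω => b ω k)
    (hindep : iIndepFun
      (Sum.elim (fun k ω => a ω k) (fun k ω => b ω k)) P)
    (hlawa : ∀ k, P.map (fun ω => a ω k) =
      gaussianReal 0 (Real.toNNReal ((1 + σq ^ 2 * ρ / Nt) / 2)))
    (hlawb : ∀ k, P.map (fun ω => b ω k) =
      gaussianReal 0 (Real.toNNReal ((1 + σq ^ 2 * ρ / Nt) / 2)))
    (n' : Ω → Fin K → ℂ) (hn' : ∀ ω k, n' ω k = a ω k + b ω k * Complex.I)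
    (yhat : Ω → Fin K → ℂ)
    (hyhat : ∀ ω k, yhat ω k = (Real.sqrt (ρ / Nt) : ℂ) * H.mulVec x k + n' ω k)
    (xcheck : Ω → Fin Nt → ℂ)
    (hxcheck : ∀ ω i, xcheck ω i =
      (Real.sqrt (Nt / ρ) : ℂ) * (1 / K : ℂ) * Hᴴ.mulVec (yhat ω) i) :
    (1 / Nt : ℝ) * ∫ ω, ∑ i, ‖x i - xcheck ω i‖ ^ 2 ∂P = (Nt * ρ⁻¹ + σq ^ 2) / K := by
  have hNt0 : (Nt:ℝ) ≠ 0 := by positivity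
  have hK0R : (K:ℝ) ≠ 0 := Nat.cast_ne_zero.mpr (by omega)
  have hK0C : (K:ℂ) ≠ 0 := Nat.cast_ne_zero.mpr (by omega)
  set σs : ℝ := 1 + σq ^ 2 * ρ / Nt with hσs_def
  have hσs : 0 < σs := by positivity
  set V : ℝ≥0 := Real.toNNReal (σs / 2) with hV_def
  have hVcoe : (V:ℝ) = σs / 2 := Real.coe_toNNReal _ (by positivity)
  have hVne : V ≠ 0 := by
    simp only [hV_def, ne_eq, Real.toNNReal_eq_zero, not_le]
    positivity
  set F : Fin K ⊕ Fin K → Ω → ℝ := Sum.elim (fun k ω => a ω k) (fun k ω => b ω k) with hF_def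
  have mF : ∀ i, Measurable (F i) := by rintro (k | k); exacts [ham k, hbm k]
  have lawF : ∀ i, P.map (F i) = gaussianReal 0 V := by rintro (k | k); exacts [hlawa k, hlawb k]
  have intF : ∀ i, Integrable (F i) P := by
    intro i
    have h := gauss_int_id V hVne
    rw [← lawF i] at h
    exact (integrable_map_measure aestronglyMeasurable_id (mF i).aemeasurable).mp h
  have EF : ∀ i, ∫ ω, F i ω ∂P = 0 := by
    intro i
    have h := integral_map (μ := P) (φ := F i) (mF i).aemeasurable
      (f := fun y : ℝ => y) aestronglyMeasurable_id
    rw [lawF i] at h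
    rw [← h]
    exact gauss_integral_id V hVne
  have L2F : ∀ i, MemLp (F i) 2 P := by
    intro i
    have h : MemLp (fun y : ℝ => y) 2 (gaussianReal 0 V) :=
      (memLp_two_iff_integrable_sq aestronglyMeasurable_id).mpr (gauss_int_sq V hVne)
    rw [← lawF i] at h
    exact (memLp_map_measure_iff aestronglyMeasurable_id (mF i).aemeasurable).mp h
  have E2F : ∀ i, ∫ ω, F i ω ^ 2 ∂P = σs / 2 := by
    intro i
    have h := integral_map (μ := P) (φ := F i) (mF i).aemeasurable
      (f := fun y : ℝ => y ^ 2) (measurable_id.pow_const 2).aestronglyMeasurable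
    rw [lawF i] at h
    rw [← h, gauss_integral_sq V hVne, hVcoe]
  have intmul : ∀ i j, Integrable (fun ω => F i ω * F j ω) P := by
    intro i j
    have h : MemLp (F i • F j) 1 P :=
      (L2F j).smul (L2F i)
    have h2 := memLp_one_iff_integrable.mp h
    exact h2.congr (Filter.Eventually.of_forall fun ω => by
      simp [Pi.smul_apply', smul_eq_mul])
  have Emul0 : ∀ i j, i ≠ j → ∫ ω, F i ω * F j ω ∂P = 0 := by
    intro i j hij
    have h := IndepFun.integral_mul_eq_mul_integral (hindep.indepFun hij) (intF i).aestronglyMeasurable (intF j).aestronglyMeasurable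
    calc ∫ ω, F i ω * F j ω ∂P = ∫ ω, (F i * F j) ω ∂P := rfl
      _ = 0 := by rw [h, EF i, EF j, mul_zero]
  -- decomposition of complex products
  have hdec : ∀ (k l : Fin K) (ω : Ω), n' ω k * (starRingEnd ℂ) (n' ω l)
      = ((a ω k * a ω l + b ω k * b ω l : ℝ) : ℂ)
        + ((b ω k * a ω l - a ω k * b ω l : ℝ) : ℂ) * Complex.I := by
    intro k l ω
    rw [hn', hn']
    push_cast
    simp only [map_add, _root_.map_mul, Complex.conj_ofReal, Complex.conj_I]
    ring_nf
    simp [Complex.I_sq]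
  have g1int : ∀ k l : Fin K, Integrable (fun ω => a ω k * a ω l + b ω k * b ω l) P :=
    fun k l => (intmul (Sum.inl k) (Sum.inl l)).add (intmul (Sum.inr k) (Sum.inr l))
  have g2int : ∀ k l : Fin K, Integrable (fun ω => b ω k * a ω l - a ω k * b ω l) P :=
    fun k l => (intmul (Sum.inr k) (Sum.inl l)).sub (intmul (Sum.inl k) (Sum.inr l))
  have intc1 : ∀ k l : Fin K,
      Integrable (fun ω => ((a ω k * a ω l + b ω k * b ω l : ℝ) : ℂ)) P :=
    fun k l => (g1int k l).ofReal
  have intc2 : ∀ k l : Fin K,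
      Integrable (fun ω => ((b ω k * a ω l - a ω k * b ω l : ℝ) : ℂ) * Complex.I) P :=
    fun k l => ((g2int k l).ofReal).mul_const Complex.I
  have intc : ∀ k l : Fin K, Integrable (fun ω => n' ω k * (starRingEnd ℂ) (n' ω l)) P := by
    intro k l
    rw [show (fun ω => n' ω k * (starRingEnd ℂ) (n' ω l))
        = fun ω => ((a ω k * a ω l + b ω k * b ω l : ℝ) : ℂ)
          + ((b ω k * a ω l - a ω k * b ω l : ℝ) : ℂ) * Complex.I from funext (hdec k l)]
    exact (intc1 k l).add (intc2 k l)
  have hIR : ∀ g : Ω → ℝ, ∫ ω, ((g ω : ℝ) : ℂ) ∂P = ((∫ ω, g ω ∂P : ℝ) : ℂ) :=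
    fun g => integral_ofReal
  have hIm : ∀ g : Ω → ℝ,
      ∫ ω, ((g ω : ℝ) : ℂ) * Complex.I ∂P = ((∫ ω, g ω ∂P : ℝ) : ℂ) * Complex.I := by
    intro g
    rw [show (fun ω => ((g ω : ℝ) : ℂ) * Complex.I) = fun ω => (g ω) • Complex.I from
      funext fun ω => Complex.real_smul.symm]
    rw [integral_smul_const, Complex.real_smul]
  have intaa : ∀ k l : Fin K, Integrable (fun ω => a ω k * a ω l) P :=
    fun k l => intmul (Sum.inl k) (Sum.inl l)
  have intbb : ∀ k l : Fin K, Integrable (fun ω => b ω k * b ω l) P :=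
    fun k l => intmul (Sum.inr k) (Sum.inr l)
  have intba : ∀ k l : Fin K, Integrable (fun ω => b ω k * a ω l) P :=
    fun k l => intmul (Sum.inr k) (Sum.inl l)
  have intab : ∀ k l : Fin K, Integrable (fun ω => a ω k * b ω l) P :=
    fun k l => intmul (Sum.inl k) (Sum.inr l)
  have Ecc : ∀ k l : Fin K, ∫ ω, n' ω k * (starRingEnd ℂ) (n' ω l) ∂P
      = if k = l then (σs : ℂ) else 0 := by
    intro k l
    rw [show (fun ω => n' ω k * (starRingEnd ℂ) (n' ω l))
        = fun ω => ((a ω k * a ω l + b ω k * b ω l : ℝ) : ℂ)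
          + ((b ω k * a ω l - a ω k * b ω l : ℝ) : ℂ) * Complex.I from funext (hdec k l)]
    rw [integral_add (intc1 k l) (intc2 k l)]
    rw [hIR _, hIm _]
    by_cases hkl : k = l
    · subst hkl
      have ha2 : ∫ ω, a ω k * a ω k ∂P = σs / 2 := by
        have h := E2F (Sum.inl k)
        have h' : ∫ ω, a ω k ^ 2 ∂P = σs / 2 := h
        simpa [pow_two] using h'
      have hb2 : ∫ ω, b ω k * b ω k ∂P = σs / 2 := by
        have h := E2F (Sum.inr k)
        have h' : ∫ ω, b ω k ^ 2 ∂P = σs / 2 := h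
        simpa [pow_two] using h'
      have h1 : ∫ ω, a ω k * a ω k + b ω k * b ω k ∂P = σs := by
        rw [integral_add (intaa k k) (intbb k k), ha2, hb2]
        ring
      have h2 : ∫ ω, b ω k * a ω k - a ω k * b ω k ∂P = 0 := by
        rw [show (fun ω => b ω k * a ω k - a ω k * b ω k) = fun _ => (0:ℝ) from
          funext fun ω => by ring]
        exact integral_zero _ _
      rw [h1, h2]
      simp
    · have e1 : ∫ ω, a ω k * a ω l ∂P = 0 :=
        Emul0 (Sum.inl k) (Sum.inl l) (fun h => hkl (Sum.inl.inj h))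
      have e2 : ∫ ω, b ω k * b ω l ∂P = 0 :=
        Emul0 (Sum.inr k) (Sum.inr l) (fun h => hkl (Sum.inr.inj h))
      have e3 : ∫ ω, b ω k * a ω l ∂P = 0 :=
        Emul0 (Sum.inr k) (Sum.inl l) (by simp)
      have e4 : ∫ ω, a ω k * b ω l ∂P = 0 :=
        Emul0 (Sum.inl k) (Sum.inr l) (by simp)
      have h1 : ∫ ω, a ω k * a ω l + b ω k * b ω l ∂P = 0 := by
        rw [integral_add (intaa k l) (intbb k l), e1, e2]
        ring
      have h2 : ∫ ω, b ω k * a ω l - a ω k * b ω l ∂P = 0 := by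
        rw [integral_sub (intba k l) (intab k l), e3, e4]
        ring
      rw [h1, h2]
      simp [hkl]
  -- pointwise identities
  have hw : ∀ ω i, x i - xcheck ω i
      = -((Real.sqrt (Nt / ρ) / K : ℝ) : ℂ) * Hᴴ.mulVec (n' ω) i := by
    intro ω i
    rw [hxcheck]
    rw [show yhat ω = (fun k => (Real.sqrt (ρ / Nt) : ℂ) * H.mulVec x k + n' ω k) from
      funext (hyhat ω)]
    have hsplit : (fun k => (Real.sqrt (ρ / Nt) : ℂ) * H.mulVec x k + n' ω k)
        = (Real.sqrt (ρ / Nt) : ℂ) • H.mulVec x + n' ω := by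
      funext k; simp [Pi.add_apply, Pi.smul_apply, smul_eq_mul]
    rw [hsplit, Matrix.mulVec_add, Matrix.mulVec_smul, Matrix.mulVec_mulVec, hH,
      Matrix.smul_mulVec, Matrix.one_mulVec]
    simp only [Pi.add_apply, Pi.smul_apply, smul_eq_mul]
    have h1 : (Real.sqrt Nt : ℂ) ≠ 0 := by
      rw [Complex.ofReal_ne_zero]
      positivity
    have h2 : (Real.sqrt ρ : ℂ) ≠ 0 := by
      rw [Complex.ofReal_ne_zero]
      positivity
    have h3 : ((Real.sqrt (Nt / ρ) : ℝ) : ℂ) * ((Real.sqrt (ρ / Nt) : ℝ) : ℂ) = 1 := by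
      rw [← Complex.ofReal_mul, ← Real.sqrt_mul (by positivity),
        show (Nt:ℝ) / ρ * (ρ / Nt) = 1 by field_simp, Real.sqrt_one, Complex.ofReal_one]
    have hK1 : (K:ℂ)⁻¹ * K = 1 := inv_mul_cancel₀ hK0C
    push_cast
    linear_combination (-(x i)) * h3 +
      (-(x i) * ((Real.sqrt (Nt / ρ) : ℝ) : ℂ) * ((Real.sqrt (ρ / Nt) : ℝ) : ℂ)) * hK1
  set T : Ω → ℂ := fun ω => ∑ k, ∑ l,
      (∑ i, Hᴴ i k * (starRingEnd ℂ) (Hᴴ i l)) * (n' ω k * (starRingEnd ℂ) (n' ω l)) with hT_def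
  have hptwise : ∀ ω, (∑ i, ‖x i - xcheck ω i‖ ^ 2)
      = ((Nt / ρ) / K ^ 2) * (T ω).re := by
    intro ω
    have h2 : ∀ i, ‖x i - xcheck ω i‖ ^ 2 = ((Nt / ρ) / K ^ 2) * ‖Hᴴ.mulVec (n' ω) i‖ ^ 2 := by
      intro i
      rw [hw ω i, norm_mul, norm_neg, Complex.norm_real, Real.norm_eq_abs,
        abs_of_nonneg (by positivity), mul_pow, div_pow, Real.sq_sqrt (by positivity)]
    rw [Finset.sum_congr rfl fun i (_ : i ∈ Finset.univ) => h2 i, ← Finset.mul_sum]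
    congr 1
    -- ∑ i ‖(Hᴴ v) i‖² = re T ω
    have h1 : ∀ z : ℂ, ‖z‖ ^ 2 = (z * (starRingEnd ℂ) z).re := by
      intro z
      rw [Complex.mul_conj, Complex.ofReal_re, Complex.normSq_eq_norm_sq]
    calc (∑ i, ‖Hᴴ.mulVec (n' ω) i‖ ^ 2 : ℝ)
        = (∑ i, (Hᴴ.mulVec (n' ω) i * (starRingEnd ℂ) (Hᴴ.mulVec (n' ω) i))).re := by
          rw [Complex.re_sum]
          exact Finset.sum_congr rfl fun i _ => h1 _
      _ = (T ω).re := by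
          congr 1
          simp only [hT_def, Matrix.mulVec, dotProduct, map_sum, _root_.map_mul,
            Finset.sum_mul_sum]
          rw [Finset.sum_comm]
          refine Finset.sum_congr rfl fun k _ => ?_
          rw [Finset.sum_comm]
          refine Finset.sum_congr rfl fun l _ => ?_
          rw [Finset.sum_mul]
          exact Finset.sum_congr rfl fun i _ => by ring
  have hTint : Integrable T P := by
    refine integrable_finset_sum _ fun k _ => integrable_finset_sum _ fun l _ => ?_
    exact (intc k l).const_mul _
  have htrace : (∑ k : Fin K, ∑ i : Fin Nt, Hᴴ i k * (starRingEnd ℂ) (Hᴴ i k))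
      = (Nt : ℂ) * K := by
    rw [Finset.sum_comm]
    have key : ∀ i : Fin Nt, ∑ k : Fin K, Hᴴ i k * (starRingEnd ℂ) (Hᴴ i k) = (K : ℂ) := by
      intro i
      have h2 := congrArg (fun M => M i i) hH
      simp only [Matrix.mul_apply, Matrix.smul_apply, Matrix.one_apply_eq, smul_eq_mul,
        mul_one] at h2
      calc ∑ k : Fin K, Hᴴ i k * (starRingEnd ℂ) (Hᴴ i k)
          = ∑ k : Fin K, Hᴴ i k * H k i := by
            refine Finset.sum_congr rfl fun k _ => ?_
            congr 1
            simp [Matrix.conjTranspose_apply]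
        _ = (K : ℂ) := h2
    rw [Finset.sum_congr rfl fun i (_ : i ∈ Finset.univ) => key i]
    simp [Finset.sum_const, nsmul_eq_mul]
  have hTval : ∫ ω, T ω ∂P = ((σs * Nt * K : ℝ) : ℂ) := by
    rw [hT_def]
    rw [integral_finset_sum _ fun k _ => integrable_finset_sum _ fun l _ => (intc k l).const_mul _]
    have step : ∀ k : Fin K, ∫ ω, (∑ l, (∑ i, Hᴴ i k * (starRingEnd ℂ) (Hᴴ i l)) *
        (n' ω k * (starRingEnd ℂ) (n' ω l))) ∂P
        = (∑ i, Hᴴ i k * (starRingEnd ℂ) (Hᴴ i k)) * (σs : ℂ) := by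
      intro k
      rw [integral_finset_sum _ fun l _ => (intc k l).const_mul _]
      have : ∀ l : Fin K, ∫ ω, (∑ i, Hᴴ i k * (starRingEnd ℂ) (Hᴴ i l)) *
          (n' ω k * (starRingEnd ℂ) (n' ω l)) ∂P
          = (∑ i, Hᴴ i k * (starRingEnd ℂ) (Hᴴ i l)) * (if k = l then (σs : ℂ) else 0) := by
        intro l
        rw [integral_const_mul, Ecc k l]
      rw [Finset.sum_congr rfl fun l (_ : l ∈ Finset.univ) => this l]
      simp [Finset.sum_ite_eq, mul_ite, mul_zero]
    rw [Finset.sum_congr rfl fun k (_ : k ∈ Finset.univ) => step k, ← Finset.sum_mul, htrace]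
    push_cast
    ring
  have hre : ∫ ω, (T ω).re ∂P = σs * Nt * K := by
    have h := integral_re hTint
    rw [hTval] at h
    simpa using h
  rw [show (fun ω => ∑ i, ‖x i - xcheck ω i‖ ^ 2) = fun ω => ((Nt / ρ) / K ^ 2) * (T ω).re from
    funext hptwise]
  rw [integral_const_mul, hre, hσs_def]
  field_simp
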